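/- Let L ≥ 2, ε ≥ 0, and let m, m̃ : ℕ → ℝ be sequences satisfying |m_k| ≤ L^k, |m̃_k| ≤ L^k and |m_k − m̃_k| ≤ L^k·ε for all k. Assume that L^{−n(n−1)} ≤ h_n(m) ≤ L^{n(n−1)} and L^{−n(n−1)} ≤ h_n(m̃) ≤ L^{n(n−1)} for all n ≥ 1, and that |g_n(m)| ≤ n·L^{n(n−1)+1} and |g_n(m̃)| ≤ n·L^{n(n−1)+1} for all n ≥ 1. Then for every n ≥ 1: |g_n(m)/h_n(m) − g_n(m̃)/h_n(m̃)| ≤ n·(n+1)!·L^{4n(n−1)+1}·ε. -/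

import Mathlib

lemma prod_diff_bound {ι : Type*} [DecidableEq ι] (s : Finset ι) (a b c : ι → ℝ) (ε : ℝ)
    (hε : 0 ≤ ε) (hc : ∀ i ∈ s, 0 ≤ c i)
    (ha : ∀ i ∈ s, |a i| ≤ c i) (hb : ∀ i ∈ s, |b i| ≤ c i)
    (hab : ∀ i ∈ s, |a i - b i| ≤ c i * ε) :
    |∏ i ∈ s, a i - ∏ i ∈ s, b i| ≤ (s.card : ℝ) * (∏ i ∈ s, c i) * ε := by
  induction s using Finset.induction_on with
  | empty => simp
  | @insert x t hx ih =>
    have hcx : 0 ≤ c x := hc x (Finset.mem_insert_self _ _)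
    have hc' : ∀ i ∈ t, 0 ≤ c i := fun i hi => hc i (Finset.mem_insert_of_mem hi)
    have ha' : ∀ i ∈ t, |a i| ≤ c i := fun i hi => ha i (Finset.mem_insert_of_mem hi)
    have hb' : ∀ i ∈ t, |b i| ≤ c i := fun i hi => hb i (Finset.mem_insert_of_mem hi)
    have hab' : ∀ i ∈ t, |a i - b i| ≤ c i * ε := fun i hi => hab i (Finset.mem_insert_of_mem hi)
    have IH := ih hc' ha' hb' hab'
    rw [Finset.prod_insert hx, Finset.prod_insert hx, Finset.prod_insert hx,
      Finset.card_insert_of_notMem hx]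
    have hpb : |∏ i ∈ t, b i| ≤ ∏ i ∈ t, c i := by
      rw [Finset.abs_prod]
      exact Finset.prod_le_prod (fun i hi => abs_nonneg _) hb'
    have hpc : (0:ℝ) ≤ ∏ i ∈ t, c i := Finset.prod_nonneg hc'
    have key : a x * ∏ i ∈ t, a i - b x * ∏ i ∈ t, b i
        = a x * (∏ i ∈ t, a i - ∏ i ∈ t, b i) + (a x - b x) * ∏ i ∈ t, b i := by ring
    rw [key]
    calc |a x * (∏ i ∈ t, a i - ∏ i ∈ t, b i) + (a x - b x) * ∏ i ∈ t, b i|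
        ≤ |a x| * |∏ i ∈ t, a i - ∏ i ∈ t, b i| + |a x - b x| * |∏ i ∈ t, b i| := by
          refine (abs_add_le _ _).trans ?_
          rw [abs_mul, abs_mul]
      _ ≤ c x * ((t.card : ℝ) * (∏ i ∈ t, c i) * ε) + (c x * ε) * (∏ i ∈ t, c i) := by
          gcongr
          · exact ha x (Finset.mem_insert_self _ _)
          · exact hab x (Finset.mem_insert_self _ _)
      _ = ((t.card : ℝ) + 1) * (c x * ∏ i ∈ t, c i) * ε := by ring
      _ = ((t.card + 1 : ℕ) : ℝ) * (c x * ∏ i ∈ t, c i) * ε := by push_cast; ring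

lemma det_diff_bound {n : ℕ} (A B : Matrix (Fin n) (Fin n) ℝ) (r s : Fin n → ℝ) (ε : ℝ)
    (hε : 0 ≤ ε) (hr : ∀ i, 0 ≤ r i) (hs : ∀ j, 0 ≤ s j)
    (hA : ∀ i j, |A i j| ≤ r i * s j) (hB : ∀ i j, |B i j| ≤ r i * s j)
    (hAB : ∀ i j, |A i j - B i j| ≤ r i * s j * ε) :
    |A.det - B.det| ≤ (n.factorial : ℝ) * n * ((∏ i, r i) * (∏ j, s j)) * ε := by
  rw [Matrix.det_apply', Matrix.det_apply', ← Finset.sum_sub_distrib]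
  have key : ∀ σ : Equiv.Perm (Fin n),
      |((Equiv.Perm.sign σ : ℤ) : ℝ) * ∏ i, A (σ i) i - ((Equiv.Perm.sign σ : ℤ) : ℝ) * ∏ i, B (σ i) i|
      ≤ (n : ℝ) * ((∏ i, r i) * (∏ j, s j)) * ε := by
    intro σ
    have hsign : |((Equiv.Perm.sign σ : ℤ) : ℝ)| = 1 := by
      rcases Int.units_eq_one_or (Equiv.Perm.sign σ) with h | h <;> simp [h]
    rw [← mul_sub, abs_mul, hsign, one_mul]
    have := prod_diff_bound (Finset.univ : Finset (Fin n))
      (fun i => A (σ i) i) (fun i => B (σ i) i) (fun i => r (σ i) * s i) ε hε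
      (fun i _ => mul_nonneg (hr _) (hs _))
      (fun i _ => hA _ _) (fun i _ => hB _ _) (fun i _ => hAB _ _)
    have hprod : (∏ i, (r (σ i) * s i)) = (∏ i, r i) * (∏ j, s j) := by
      rw [Finset.prod_mul_distrib, Equiv.prod_comp σ r]
    simpa [Finset.card_univ, hprod] using this
  calc |∑ σ : Equiv.Perm (Fin n), (((Equiv.Perm.sign σ : ℤ) : ℝ) * ∏ i, A (σ i) i
          - ((Equiv.Perm.sign σ : ℤ) : ℝ) * ∏ i, B (σ i) i)|
      ≤ ∑ σ : Equiv.Perm (Fin n), |((Equiv.Perm.sign σ : ℤ) : ℝ) * ∏ i, A (σ i) i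
          - ((Equiv.Perm.sign σ : ℤ) : ℝ) * ∏ i, B (σ i) i| := Finset.abs_sum_le_sum_abs _ _
    _ ≤ ∑ _σ : Equiv.Perm (Fin n), (n : ℝ) * ((∏ i, r i) * (∏ j, s j)) * ε :=
        Finset.sum_le_sum fun σ _ => key σ
    _ = (n.factorial : ℝ) * n * ((∏ i, r i) * (∏ j, s j)) * ε := by
        rw [Finset.sum_const, Finset.card_univ, Fintype.card_perm, Fintype.card_fin, nsmul_eq_mul]
        ring

/-- The `n`-th Hankel determinant of the moment sequence `m`. -/
noncomputable def hankelDet (m : ℕ → ℝ) (n : ℕ) : ℝ :=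
  Matrix.det (Matrix.of fun i j : Fin n => m ((i : ℕ) + (j : ℕ)))

/-- The shifted Hankel determinant `g_n(m)`: the last column is shifted by one. -/
noncomputable def shiftedHankelDet (m : ℕ → ℝ) (n : ℕ) : ℝ :=
  Matrix.det (Matrix.of fun i j : Fin n =>
    if (j : ℕ) = n - 1 then m ((i : ℕ) + n) else m ((i : ℕ) + (j : ℕ)))

/-- Stability of `b_1 + ⋯ + b_n = g_n / h_n` (Heine's formula) under
`ε`-perturbations of the moments. -/
theorem stmt_14 (L ε : ℝ) (hL : 2 ≤ L) (hε : 0 ≤ ε) (m mt : ℕ → ℝ)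
    (hm : ∀ k, |m k| ≤ L ^ k) (hmt : ∀ k, |mt k| ≤ L ^ k)
    (hclose : ∀ k, |m k - mt k| ≤ L ^ k * ε)
    (hh : ∀ n : ℕ, 1 ≤ n → (L ^ (n * (n - 1)))⁻¹ ≤ hankelDet m n ∧
      hankelDet m n ≤ L ^ (n * (n - 1)))
    (hht : ∀ n : ℕ, 1 ≤ n → (L ^ (n * (n - 1)))⁻¹ ≤ hankelDet mt n ∧
      hankelDet mt n ≤ L ^ (n * (n - 1)))
    (hg : ∀ n : ℕ, 1 ≤ n → |shiftedHankelDet m n| ≤ (n : ℝ) * L ^ (n * (n - 1) + 1))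
    (hgt : ∀ n : ℕ, 1 ≤ n → |shiftedHankelDet mt n| ≤ (n : ℝ) * L ^ (n * (n - 1) + 1)) :
    ∀ n : ℕ, 1 ≤ n →
      |shiftedHankelDet m n / hankelDet m n -
          shiftedHankelDet mt n / hankelDet mt n| ≤
        (n : ℝ) * ((n + 1).factorial : ℝ) * L ^ (4 * n * (n - 1) + 1) * ε := by
  intro n hn
  have hL0 : (0:ℝ) < L := lt_of_lt_of_le two_pos hL
  have hL1 : (1:ℝ) ≤ L := le_trans one_le_two hL
  set P : ℝ := L ^ (n * (n - 1)) with hPdef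
  have hPpos : 0 < P := by positivity
  set H : ℝ := hankelDet m n
  set Ht : ℝ := hankelDet mt n
  set G : ℝ := shiftedHankelDet m n
  set Gt : ℝ := shiftedHankelDet mt n
  have hHpos : 0 < H := lt_of_lt_of_le (inv_pos.mpr hPpos) (hh n hn).1
  have hHtpos : 0 < Ht := lt_of_lt_of_le (inv_pos.mpr hPpos) (hht n hn).1
  -- exponent/product computations
  have sum1 : ∑ i ∈ Finset.range n, (i + i) = n * (n - 1) := by
    have h2 := Finset.sum_range_id_mul_two n
    have := Finset.sum_add_distrib (s := Finset.range n) (f := fun i => i) (g := fun i => i)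
    omega
  have sum2 : ∑ i ∈ Finset.range n, (i + (if i = n - 1 then n else i)) = n * (n - 1) + 1 := by
    obtain ⟨k, rfl⟩ : ∃ k, n = k + 1 := ⟨n - 1, by omega⟩
    rw [Finset.sum_range_succ]
    have hcongr : ∑ i ∈ Finset.range k, (i + (if i = k + 1 - 1 then k + 1 else i))
        = ∑ i ∈ Finset.range k, (i + i) := by
      refine Finset.sum_congr rfl fun i hi => ?_
      have hne : i ≠ k + 1 - 1 := by
        have := Finset.mem_range.mp hi; omega
      rw [if_neg hne]
    rw [hcongr]
    rw [if_pos (by omega : k = k + 1 - 1)]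
    have h2 := Finset.sum_range_id_mul_two k
    have h3 : k * (k - 1) + 2 * k = (k + 1) * (k + 1 - 1) := by
      cases k with
      | zero => simp
      | succ j => simp only [Nat.succ_sub_one]; ring
    have h4 := Finset.sum_add_distrib (s := Finset.range k) (f := fun i => i) (g := fun i => i)
    omega
  have prodH : (∏ i : Fin n, L ^ (i : ℕ)) * (∏ j : Fin n, L ^ (j : ℕ)) = P := by
    rw [← Finset.prod_mul_distrib]
    simp_rw [← pow_add]
    rw [Finset.prod_pow_eq_pow_sum, hPdef]
    congr 1
    rw [Fin.sum_univ_eq_sum_range (fun i => i + i) n]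
    exact sum1
  have prodG : (∏ i : Fin n, L ^ (i : ℕ)) *
      (∏ j : Fin n, (if (j : ℕ) = n - 1 then L ^ n else L ^ (j : ℕ))) = P * L := by
    rw [← Finset.prod_mul_distrib]
    have : ∀ j : Fin n, L ^ (j : ℕ) * (if (j : ℕ) = n - 1 then L ^ n else L ^ (j : ℕ))
        = L ^ ((j : ℕ) + (if (j : ℕ) = n - 1 then n else (j : ℕ))) := by
      intro j; split_ifs <;> rw [pow_add]
    simp_rw [this]
    rw [Finset.prod_pow_eq_pow_sum, hPdef, ← pow_succ]
    congr 1
    rw [Fin.sum_univ_eq_sum_range (fun i => i + (if i = n - 1 then n else i)) n]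
    exact sum2
  -- determinant difference bounds
  have dH : |H - Ht| ≤ (n.factorial : ℝ) * n * P * ε := by
    have := det_diff_bound (n := n)
      (Matrix.of fun i j : Fin n => m ((i : ℕ) + (j : ℕ)))
      (Matrix.of fun i j : Fin n => mt ((i : ℕ) + (j : ℕ)))
      (fun i => L ^ (i : ℕ)) (fun j => L ^ (j : ℕ)) ε hε
      (fun i => by positivity) (fun j => by positivity)
      (fun i j => by rw [← pow_add]; exact hm _)
      (fun i j => by rw [← pow_add]; exact hmt _)
      (fun i j => by rw [← pow_add]; exact hclose _)
    rw [prodH] at this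
    simpa [H, Ht, hankelDet, mul_assoc] using this
  have dG : |G - Gt| ≤ (n.factorial : ℝ) * n * (P * L) * ε := by
    have := det_diff_bound (n := n)
      (Matrix.of fun i j : Fin n =>
        if (j : ℕ) = n - 1 then m ((i : ℕ) + n) else m ((i : ℕ) + (j : ℕ)))
      (Matrix.of fun i j : Fin n =>
        if (j : ℕ) = n - 1 then mt ((i : ℕ) + n) else mt ((i : ℕ) + (j : ℕ)))
      (fun i => L ^ (i : ℕ)) (fun j => if (j : ℕ) = n - 1 then L ^ n else L ^ (j : ℕ)) ε hε
      (fun i => by positivity) (fun j => by split_ifs <;> positivity)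
      (fun i j => by dsimp only [Matrix.of_apply]; split_ifs <;> (rw [← pow_add]; first | exact hm _))
      (fun i j => by dsimp only [Matrix.of_apply]; split_ifs <;> (rw [← pow_add]; first | exact hmt _))
      (fun i j => by dsimp only [Matrix.of_apply]; split_ifs <;> (rw [← pow_add]; first | exact hclose _))
    rw [prodG] at this
    simpa [G, Gt, shiftedHankelDet, mul_assoc] using this
  -- assemble
  have hHle : H ≤ P := (hh n hn).2
  have hHtle : Ht ≤ P := (hht n hn).2
  have hGle : |G| ≤ (n : ℝ) * (P * L) := by
    have := hg n hn; rwa [pow_succ, ← hPdef] at this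
  have hGtle : |Gt| ≤ (n : ℝ) * (P * L) := by
    have := hgt n hn; rwa [pow_succ, ← hPdef] at this
  rw [div_sub_div _ _ (ne_of_gt hHpos) (ne_of_gt hHtpos), abs_div,
    abs_of_pos (mul_pos hHpos hHtpos)]
  have hnum : |G * Ht - H * Gt| ≤
      (n.factorial : ℝ) * n * (P * L) * ε * P + ((n : ℝ) * (P * L)) * ((n.factorial : ℝ) * n * P * ε) := by
    have hsplit : G * Ht - H * Gt = (G - Gt) * Ht + Gt * (Ht - H) := by ring
    rw [hsplit]
    calc |(G - Gt) * Ht + Gt * (Ht - H)| ≤ |G - Gt| * |Ht| + |Gt| * |Ht - H| := by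
          refine (abs_add_le _ _).trans ?_; rw [abs_mul, abs_mul]
      _ ≤ ((n.factorial : ℝ) * n * (P * L) * ε) * P + ((n : ℝ) * (P * L)) * ((n.factorial : ℝ) * n * P * ε) := by
          gcongr
          · rw [abs_of_pos hHtpos]; exact hHtle
          · rw [abs_sub_comm]; exact dH
  have hdenom : (P * P)⁻¹ ≤ H * Ht := by
    rw [mul_inv]
    exact mul_le_mul (hh n hn).1 (hht n hn).1 (le_of_lt (inv_pos.mpr hPpos)) (le_of_lt hHpos)
  have hnum0 : 0 ≤ |G * Ht - H * Gt| := abs_nonneg _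
  calc |G * Ht - H * Gt| / (H * Ht)
      ≤ |G * Ht - H * Gt| / (P * P)⁻¹ := by
        exact div_le_div_of_nonneg_left hnum0 (by positivity) hdenom
    _ = |G * Ht - H * Gt| * (P * P) := by field_simp
    _ ≤ ((n.factorial : ℝ) * n * (P * L) * ε * P + ((n : ℝ) * (P * L)) * ((n.factorial : ℝ) * n * P * ε)) * (P * P) := by
        gcongr
    _ ≤ (n : ℝ) * ((n + 1).factorial : ℝ) * L ^ (4 * n * (n - 1) + 1) * ε := by
        have hpow : L ^ (4 * n * (n - 1) + 1) = P ^ 4 * L := by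
          have h4 : 4 * n * (n - 1) = n * (n - 1) * 4 := by ring
          rw [pow_succ, h4, pow_mul, hPdef]
        rw [hpow, Nat.factorial_succ]
        push_cast
        nlinarith [hPpos, hL0]
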